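/- arXiv:1909.01849 — 2 statements merged into one kernel-verified Lean document; each statement's English description precedes it below -/
import Mathlib

section
/- Let G be a torsion-free abelian group and A = (a_1,...,a_q) a q-tuple of elements of G. Suppose A has the property (P_{r,s}) for some integers r,s with q ≥ r > s > 1, meaning: for any r indices l(1),...,l(r) in {1,...,q} and any choice of s positions i_1 < ... < i_s among them, there is a different choice of s positions j_1 < ... < j_s such that a_{l(i_1)}···a_{l(i_s)} = a_{l(j_1)}···a_{l(j_s)}. Then there exist q−r+2 indices i_1 < ... < i_{q−r+2} with a_{i_1} = a_{i_2} = ... = a_{i_{q−r+2}}. -/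
open Finset

/-- The ordered case of Fujimoto's lemma. -/
theorem fujimoto_ordered {L : Type*} [CommGroup L] [LinearOrder L] [IsOrderedMonoid L]
    (q r s : ℕ) (hqr : r ≤ q) (hrs : s < r) (hs : 1 < s)
    (b : Fin q → L)
    (hP : ∀ l : Fin r → Fin q, Function.Injective l →
      ∀ I : Finset (Fin r), I.card = s →
        ∃ J : Finset (Fin r), J.card = s ∧ J ≠ I ∧
          ∏ i ∈ I, b (l i) = ∏ j ∈ J, b (l j)) :
    ∃ T : Finset (Fin q), T.card = q - r + 2 ∧
      ∀ i ∈ T, ∀ j ∈ T, b i = b j := by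
  classical
  by_contra hcon
  push_neg at hcon
  set σ := Tuple.sort b with hσ
  set c : Fin q → L := b ∘ σ with hcdef
  have hc : Monotone c := Tuple.monotone_sort b
  have hs1q : s - 1 < q := by omega
  set v : L := c ⟨s - 1, hs1q⟩ with hv
  -- the first index where c exceeds v (or q if none)
  have hPex : ∃ n, q ≤ n ∨ ∃ h : n < q, v < c ⟨n, h⟩ := ⟨q, Or.inl le_rfl⟩
  set t := Nat.find hPex with ht
  have htq : t ≤ q := Nat.find_le (Or.inl le_rfl)
  have hbelow : ∀ i : Fin q, i.val < t → c i ≤ v := by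
    intro i hi
    have := Nat.find_min hPex hi
    push_neg at this
    simpa using this.2 i.isLt
  have habove : ∀ i : Fin q, t ≤ i.val → v < c i := by
    intro i hi
    have hspec := Nat.find_spec hPex
    rcases hspec with h | ⟨h, hlt⟩
    · omega
    · exact lt_of_lt_of_le hlt (hc (by exact hi))
  have hst : s ≤ t := by
    rw [ht, Nat.le_find_iff]
    intro n hn
    push_neg
    refine ⟨by omega, fun h => ?_⟩
    exact hc (Fin.mk_le_mk.mpr (by omega))
  -- t is not too large
  have htQ : t ≤ q - r + s := by
    by_contra hbig
    push_neg at hbig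
    -- indices s-1 .. q-r+s are all < t and give c = v
    have hqrs : q - r + s < q := by omega
    set f : Fin (q - r + 2) → Fin q := fun k =>
      σ ⟨s - 1 + k.val, by omega⟩ with hf
    have hfinj : Function.Injective f := by
      intro x y hxy
      have := (Equiv.injective σ) hxy
      have := Fin.val_eq_of_eq this
      simp at this
      exact Fin.ext (by omega)
    set T : Finset (Fin q) := Finset.univ.map ⟨f, hfinj⟩ with hT
    have hTcard : T.card = q - r + 2 := by simp [hT]
    have hTv : ∀ i ∈ T, b i = v := by
      intro i hi
      rw [hT, Finset.mem_map] at hi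
      obtain ⟨k, -, rfl⟩ := hi
      have h1 : c ⟨s - 1 + k.val, by omega⟩ ≤ v := by
        apply hbelow
        simp only []
        omega
      have h2 : v ≤ c ⟨s - 1 + k.val, by omega⟩ := hc (by simp [Fin.le_def])
      have : c ⟨s - 1 + k.val, by omega⟩ = v := le_antisymm h1 h2
      simpa [hcdef] using this
    obtain ⟨i, hi, j, hj, hne⟩ := hcon T hTcard
    exact hne ((hTv i hi).trans (hTv j hj).symm)
  -- construct the selection
  have htqr : t + (r - s) ≤ q := by omega
  set e : Fin r → Fin q := fun k =>
    if h : k.val < s then ⟨k.val, by omega⟩ else ⟨t + (k.val - s), by omega⟩ with he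
  have hemono : StrictMono e := by
    intro k1 k2 hk
    rw [Fin.lt_def] at hk ⊢
    simp only [he]
    split_ifs <;> simp only [] <;> omega
  set l : Fin r → Fin q := σ ∘ e with hl
  have hlinj : Function.Injective l := (Equiv.injective σ).comp hemono.injective
  have hd_le : ∀ k : Fin r, k.val < s → b (l k) ≤ v := by
    intro k hk
    have : b (l k) = c (e k) := rfl
    rw [this]
    apply hbelow
    simp only [he, dif_pos hk]
    omega
  have hd_gt : ∀ k : Fin r, s ≤ k.val → v < b (l k) := by
    intro k hk
    have : b (l k) = c (e k) := rfl
    rw [this]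
    apply habove
    simp only [he, dif_neg (Nat.not_lt.mpr hk)]
    omega
  set I : Finset (Fin r) := Finset.univ.filter (fun k => k.val < s) with hI
  have hIcard : I.card = s := by
    have : I = Finset.univ.map (Fin.castLEEmb (le_of_lt hrs)) := by
      ext k
      simp only [hI, Finset.mem_filter, Finset.mem_univ, true_and, Finset.mem_map]
      constructor
      · intro hk
        exact ⟨⟨k.val, hk⟩, Fin.ext rfl⟩
      · rintro ⟨j, rfl⟩
        simp
    rw [this, Finset.card_map, Finset.card_univ, Fintype.card_fin]
  obtain ⟨J, hJcard, hJne, heq⟩ := hP l hlinj I hIcard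
  -- derive contradiction: products cannot be equal
  have hJInonempty : (J \ I).Nonempty := by
    rw [Finset.sdiff_nonempty]
    intro hsub
    exact hJne (Finset.eq_of_subset_of_card_le hsub (by omega))
  have hcards : (I \ J).card = (J \ I).card := Finset.card_sdiff_comm (by omega)
  have hA : ∏ k ∈ I \ J, b (l k) ≤ v ^ (I \ J).card := by
    apply Finset.prod_le_pow_card
    intro k hk
    have hkI := (Finset.mem_sdiff.mp hk).1
    rw [hI, Finset.mem_filter] at hkI
    exact hd_le k hkI.2
  have hB : v ^ (J \ I).card < ∏ k ∈ J \ I, b (l k) := by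
    have := Finset.prod_lt_prod_of_nonempty' (f := fun _ => v) (g := fun k => b (l k))
      hJInonempty ?_
    · simpa using this
    · intro k hk
      have hkI := (Finset.mem_sdiff.mp hk).2
      rw [hI, Finset.mem_filter] at hkI
      push_neg at hkI
      exact hd_gt k (hkI (Finset.mem_univ _))
  have hlt : ∏ k ∈ I, b (l k) < ∏ k ∈ J, b (l k) := by
    rw [← Finset.prod_inter_mul_prod_diff I J, ← Finset.prod_inter_mul_prod_diff J I,
      Finset.inter_comm J I]
    exact mul_lt_mul_right (hA.trans_lt (hcards ▸ hB)) _
  exact absurd heq (ne_of_lt hlt)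

/-- Fujimoto's lemma: a torsion-free abelian group tuple with property `(P_{r,s})`
has `q - r + 2` equal elements. -/
theorem stmt_0 (G : Type*) [CommGroup G] (hG : ∀ g : G, g ≠ 1 → ¬IsOfFinOrder g)
    (q r s : ℕ) (hqr : r ≤ q) (hrs : s < r) (hs : 1 < s)
    (a : Fin q → G)
    (hP : ∀ l : Fin r → Fin q, Function.Injective l →
      ∀ I : Finset (Fin r), I.card = s →
        ∃ J : Finset (Fin r), J.card = s ∧ J ≠ I ∧
          ∏ i ∈ I, a (l i) = ∏ j ∈ J, a (l j)) :
    ∃ T : Finset (Fin q), T.card = q - r + 2 ∧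
      ∀ i ∈ T, ∀ j ∈ T, a i = a j := by
  classical
  set H : Subgroup G := Subgroup.closure (Set.range a) with hH
  have hmem : ∀ i, a i ∈ H := fun i => Subgroup.subset_closure ⟨i, rfl⟩
  set a' : Fin q → H := fun i => ⟨a i, hmem i⟩ with ha'
  haveI : Group.FG H := Group.closure_finite_fg _
  haveI : Module.Finite ℤ (Additive H) := Module.Finite.iff_addGroup_fg.mpr inferInstance
  have hTF : ∀ g : H, g ≠ 1 → ¬IsOfFinOrder g := fun g hg hfin =>
    hG g (by simpa using hg) (Submonoid.isOfFinOrder_coe.mpr hfin)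
  haveI hTFa : IsAddTorsionFree (Additive H) := by
    rw [isAddTorsionFree_iff_not_isOfFinAddOrder]
    intro g hg hfin
    exact hTF (Additive.toMul g) hg (isOfFinOrder_ofAdd_iff.mpr hfin)
  haveI : NoZeroSMulDivisors ℤ (Additive H) :=
    IsAddTorsionFree.to_noZeroSMulDivisors_int
  haveI : Module.Free ℤ (Additive H) := Module.free_of_finite_type_torsion_free'
  set ι := Module.Free.ChooseBasisIndex ℤ (Additive H) with hι
  letI : LinearOrder ι := LinearOrder.lift' (Fintype.equivFin ι) (Fintype.equivFin ι).injective
  set bas := Module.Free.chooseBasis ℤ (Additive H) with hbas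
  set E : Additive H ≃+ (ι →₀ ℤ) := bas.repr.toAddEquiv with hE
  set ψ : H →* Multiplicative (Lex (ι →₀ ℤ)) :=
    MonoidHom.mk' (fun x => Multiplicative.ofAdd (toLex (E (Additive.ofMul x))))
      (fun x y => by
        simp only [← ofAdd_add, ← toLex_add]
        congr 1
        exact map_add E _ _) with hψ
  have hψinj : Function.Injective ψ := by
    intro x y hxy
    simp only [hψ, MonoidHom.mk'_apply] at hxy
    have := toLex.injective (Multiplicative.ofAdd.injective hxy)
    exact E.injective this
  set b : Fin q → Multiplicative (Lex (ι →₀ ℤ)) := fun i => ψ (a' i) with hb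
  have hPb : ∀ l : Fin r → Fin q, Function.Injective l →
      ∀ I : Finset (Fin r), I.card = s →
        ∃ J : Finset (Fin r), J.card = s ∧ J ≠ I ∧
          ∏ i ∈ I, b (l i) = ∏ j ∈ J, b (l j) := by
    intro l hl I hIc
    obtain ⟨J, h1, h2, h3⟩ := hP l hl I hIc
    refine ⟨J, h1, h2, ?_⟩
    have hprod : ∏ i ∈ I, a' (l i) = ∏ j ∈ J, a' (l j) := by
      apply Subtype.coe_injective
      push_cast
      exact h3
    simp only [hb]
    rw [← map_prod, ← map_prod, hprod]
  obtain ⟨T, hTcard, hTconst⟩ := fujimoto_ordered q r s hqr hrs hs b hPb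
  refine ⟨T, hTcard, fun i hi j hj => ?_⟩
  have hbij := hTconst i hi j hj
  rw [hb] at hbij
  have := hψinj hbij
  exact congrArg Subtype.val this
end

section
/- Let F, G, H be nonzero meromorphic functions on an open ball B in ℂ^m. Define for each multi-index α the Cartan auxiliary function Φ^α(F,G,H) = F·G·H · det of the 3×3 matrix with rows (1,1,1), (1/F, 1/G, 1/H), (D^α(1/F), D^α(1/G), D^α(1/H)), where D^α denotes the partial derivative of order α. If Φ^α(F,G,H) ≡ 0 and Φ^α(1/F,1/G,1/H) ≡ 0 for all multi-indices α with |α| ≤ 1, then either (i) F = G, or G = H, or H = F; or (ii) F/G, G/H and H/F are all constant. -/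
private lemma ratio_const {m : ℕ} {K : Type*} [Field K] [Algebra ℂ K]
    (D : Fin m → Derivation ℂ K K)
    (hconst : ∀ x : K, (∀ k, D k x = 0) → ∃ c : ℂ, x = algebraMap ℂ K c)
    (a b : K) (ha : a ≠ 0) (h : ∀ k, a * D k b = b * D k a) :
    ∃ c : ℂ, b = algebraMap ℂ K c * a := by
  obtain ⟨c, hc⟩ := hconst (b / a) (fun k => by
    rw [Derivation.leibniz_div, smul_eq_mul, smul_eq_mul, smul_eq_mul]
    rw [show a * D k b - b * D k a = 0 by rw [h k]; ring]
    ring)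
  refine ⟨c, ?_⟩
  field_simp at hc
  linear_combination hc

open Matrix in
/-- Lemma 2.3 (Fujimoto): `K` is the differential field of meromorphic functions on a
ball in `ℂ^m`, with partial derivatives `D k` (`k = 1,…,m`, the operators `D^α` with
`|α| = 1`; for `|α| = 0` the Cartan function vanishes trivially), in which the only
elements killed by all derivations are the constants.  If all Cartan auxiliary
functions `Φ^α(F,G,H)` and `Φ^α(1/F,1/G,1/H)` with `|α| ≤ 1` vanish, then either two
of `F, G, H` coincide, or `F/G`, `G/H`, `H/F` are all constant. -/
theorem stmt_1 (m : ℕ) (K : Type*) [Field K] [Algebra ℂ K]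
    (D : Fin m → Derivation ℂ K K)
    (hconst : ∀ x : K, (∀ k, D k x = 0) → ∃ c : ℂ, x = algebraMap ℂ K c)
    (F G H : K) (hF : F ≠ 0) (hG : G ≠ 0) (hH : H ≠ 0)
    (hΦ : ∀ k, F * G * H *
      Matrix.det !![1, 1, 1; F⁻¹, G⁻¹, H⁻¹; D k F⁻¹, D k G⁻¹, D k H⁻¹] = 0)
    (hΦinv : ∀ k, F⁻¹ * G⁻¹ * H⁻¹ *
      Matrix.det !![1, 1, 1; F, G, H; D k F, D k G, D k H] = 0) :
    (F = G ∨ G = H ∨ H = F) ∨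
      (∃ c₁ c₂ c₃ : ℂ, F / G = algebraMap ℂ K c₁ ∧ G / H = algebraMap ℂ K c₂ ∧
        H / F = algebraMap ℂ K c₃) := by
  by_cases hFG : F = G
  · exact Or.inl (Or.inl hFG)
  by_cases hGH : G = H
  · exact Or.inl (Or.inr (Or.inl hGH))
  by_cases hHF : H = F
  · exact Or.inl (Or.inr (Or.inr hHF))
  right
  set A := algebraMap ℂ K with hA
  have hAinj : Function.Injective A := RingHom.injective A
  have ha : G - F ≠ 0 := sub_ne_zero.mpr (Ne.symm hFG)
  have hb : H - F ≠ 0 := sub_ne_zero.mpr hHF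
  have hba : H - G ≠ 0 := sub_ne_zero.mpr (Ne.symm hGH)
  -- first ratio, from hΦinv
  obtain ⟨c, hc⟩ := ratio_const D hconst (G - F) (H - F) ha (fun k => by
    have hd : Matrix.det !![1, 1, 1; F, G, H; D k F, D k G, D k H] = 0 :=
      (mul_eq_zero.mp (hΦinv k)).resolve_left
        (mul_ne_zero (mul_ne_zero (inv_ne_zero hF) (inv_ne_zero hG)) (inv_ne_zero hH))
    simp [Matrix.det_fin_three] at hd
    simp only [_root_.map_sub]
    linear_combination hd)
  -- second ratio, from hΦ
  have ha' : G⁻¹ - F⁻¹ ≠ 0 := sub_ne_zero.mpr (fun h => hFG (inv_injective h).symm)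
  have hb' : H⁻¹ - F⁻¹ ≠ 0 := sub_ne_zero.mpr (fun h => hHF (inv_injective h))
  obtain ⟨c', hc'⟩ := ratio_const D hconst (G⁻¹ - F⁻¹) (H⁻¹ - F⁻¹) ha' (fun k => by
    have hd : Matrix.det !![1, 1, 1; F⁻¹, G⁻¹, H⁻¹; D k F⁻¹, D k G⁻¹, D k H⁻¹] = 0 :=
      (mul_eq_zero.mp (hΦ k)).resolve_left
        (mul_ne_zero (mul_ne_zero hF hG) hH)
    simp [Matrix.det_fin_three] at hd
    simp only [_root_.map_sub]
    linear_combination hd)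
  have hc0 : c ≠ 0 := by
    rintro rfl
    simp at hc
    exact hb hc
  have hc1 : c ≠ 1 := by
    rintro rfl
    simp at hc
    exact hba (by linear_combination hc)
  have hc'0 : c' ≠ 0 := by
    rintro rfl
    simp at hc'
    exact hb' hc'
  -- key relation : A c * G = A c' * H
  have key : A c * G = A c' * H := by
    have h2 : (F * (G - F)) * (A c * G) = (F * (G - F)) * (A c' * H) := by
      field_simp at hc'
      linear_combination -F * hc' - (F * G) * hc
    exact mul_left_cancel₀ (mul_ne_zero hF ha) h2
  have hc'1 : c' ≠ 1 := by
    rintro rfl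
    rw [_root_.map_one, one_mul] at key
    have : (1 - A c) * F = 0 := by linear_combination -hc - key
    rcases mul_eq_zero.mp this with h | h
    · have : A c = A 1 := by rw [_root_.map_one]; linear_combination -h
      exact hc1 (hAinj this)
    · exact hF h
  have hAc : A c ≠ 0 := fun h => hc0 (hAinj (by rw [h, _root_.map_zero]))
  have hAc' : A c' ≠ 0 := fun h => hc'0 (hAinj (by rw [h, _root_.map_zero]))
  have hAc1 : (1 : K) - A c ≠ 0 := fun h => hc1 (hAinj (by rw [_root_.map_one]; linear_combination -h))
  have hAc'1 : (1 : K) - A c' ≠ 0 := fun h => hc'1 (hAinj (by rw [_root_.map_one]; linear_combination -h))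
  refine ⟨c * (1 - c') / (c' * (1 - c)), c' / c, (1 - c) / (1 - c'), ?_, ?_, ?_⟩
  · rw [_root_.map_div₀, div_eq_div_iff hG (by
      simp only [_root_.map_mul, _root_.map_sub, _root_.map_one]
      exact mul_ne_zero hAc' hAc1)]
    simp only [_root_.map_mul, _root_.map_sub, _root_.map_one]
    linear_combination (-(A c')) * hc - key
  · rw [_root_.map_div₀, div_eq_div_iff hH hAc]
    linear_combination key
  · rw [_root_.map_div₀, div_eq_div_iff hF (by
      simp only [_root_.map_sub, _root_.map_one]; exact hAc'1)]
    simp only [_root_.map_sub, _root_.map_one]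
    linear_combination hc + key
end
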